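/- Let n ≥ 3 and let N be a smooth and symmetric norm on ℝ^n with N(e_1) = 1 (hence N(e_i) = 1 for every standard basis vector e_i). Let c > 0 be such that N(c, c, 0, …, 0) = 1, let ε_0 > 0 satisfy N(x + ε_0·y) + N(x − ε_0·y) ≤ 2 + ε_0/(3n) for all x, y with N(x) ≤ 1 and N(y) ≤ 1, and set ε = ε_0/(3n). Then N(c − ε, c − ε, 3ε, 3ε, …, 3ε) ≤ 1. -/

import Mathlib

/-- `N` is a norm on `ℝ^n`. -/
def IsNorm {n : ℕ} (N : (Fin n → ℝ) → ℝ) : Prop :=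
  (∀ x, N x = 0 ↔ x = 0) ∧
  (∀ (c : ℝ) (x : Fin n → ℝ), N (c • x) = |c| * N x) ∧
  (∀ x y : Fin n → ℝ, N (x + y) ≤ N x + N y)

/-- `N` is permutation-invariant. -/
def PermInvariant {n : ℕ} (N : (Fin n → ℝ) → ℝ) : Prop :=
  ∀ (σ : Equiv.Perm (Fin n)) (x : Fin n → ℝ), N (fun i => x (σ i)) = N x

/-- `N` is 1-unconditional. -/
def Unconditional {n : ℕ} (N : (Fin n → ℝ) → ℝ) : Prop :=
  ∀ ε : Fin n → ℝ, (∀ i, ε i = 1 ∨ ε i = -1) →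
    ∀ x : Fin n → ℝ, N (fun i => ε i * x i) = N x

/-- `N` is smooth: at every point of the unit sphere there is exactly one
supporting functional. -/
def SmoothNorm {n : ℕ} (N : (Fin n → ℝ) → ℝ) : Prop :=
  ∀ x : Fin n → ℝ, N x = 1 →
    ∃! f : (Fin n → ℝ) →ₗ[ℝ] ℝ, f x = 1 ∧ ∀ y : Fin n → ℝ, N y ≤ 1 → f y ≤ 1

/-- Let `N` be a smooth and symmetric norm on `ℝ^n` (`n ≥ 3`) with `N(e₁) = 1`, let `c > 0`
satisfy `N(c, c, 0, …, 0) = 1`, and let `ε₀ > 0` satisfy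
`N(x + ε₀y) + N(x − ε₀y) ≤ 2 + ε₀/(3n)` for all `x, y` in the unit ball. Then with
`ε = ε₀/(3n)` one has `N(c − ε, c − ε, 3ε, …, 3ε) ≤ 1`. -/
theorem norm_perturbed_diagonal_le_one (n : ℕ) (hn : 3 ≤ n)
    (N : (Fin n → ℝ) → ℝ) (hN : IsNorm N) (hperm : PermInvariant N)
    (huncond : Unconditional N) (hsmooth : SmoothNorm N)
    (he : N (Pi.single (⟨0, by omega⟩ : Fin n) 1) = 1)
    (c : ℝ) (hc : 0 < c)
    (hvc : N (fun i => if (i : ℕ) < 2 then c else 0) = 1)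
    (ε₀ : ℝ) (hε₀ : 0 < ε₀)
    (hmod : ∀ x y : Fin n → ℝ, N x ≤ 1 → N y ≤ 1 →
      N (x + ε₀ • y) + N (x - ε₀ • y) ≤ 2 + ε₀ / (3 * n)) :
    N (fun i => if (i : ℕ) < 2 then c - ε₀ / (3 * n) else 3 * (ε₀ / (3 * n))) ≤ 1 := by

  classical
  obtain ⟨hzero, hsmul, htri⟩ := hN
  have hnpos : (0:ℝ) < (n:ℝ) := by exact_mod_cast (by omega : 0 < n)
  set ε := ε₀ / (3 * (n:ℝ)) with hεdef
  have hε : 0 < ε := div_pos hε₀ (by positivity)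
  have hN0 : N 0 = 0 := (hzero 0).2 rfl
  -- zeroing lemma
  have hdrop : ∀ (x : Fin n → ℝ) (S : Finset (Fin n)),
      N (fun i => if i ∈ S then x i else 0) ≤ N x := by
    intro x S
    set e : Fin n → ℝ := fun i => if i ∈ S then 1 else -1 with hedef
    have h1 : N (fun i => e i * x i) = N x :=
      huncond e (fun i => by by_cases h : i ∈ S <;> simp [hedef, h]) x
    have heq : (fun i => if i ∈ S then x i else 0)
        = (2:ℝ)⁻¹ • (x + fun i => e i * x i) := by
      funext i
      by_cases h : i ∈ S <;> simp [hedef, h, Pi.smul_apply, Pi.add_apply] <;> ring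
    have htr := htri x (fun i => e i * x i)
    rw [h1] at htr
    rw [heq, hsmul]
    rw [show |(2:ℝ)⁻¹| = (2:ℝ)⁻¹ from abs_of_pos (by norm_num)]
    linarith
  -- norms of basis vectors
  have hsingle : ∀ i : Fin n, N (Pi.single i (1:ℝ)) = 1 := by
    intro i
    have hp := hperm (Equiv.swap (⟨0, by omega⟩ : Fin n) i)
      (Pi.single (⟨0, by omega⟩ : Fin n) 1)
    have heq : (fun j => (Pi.single (⟨0, by omega⟩ : Fin n) 1 : Fin n → ℝ)
        ((Equiv.swap (⟨0, by omega⟩ : Fin n) i) j)) = (Pi.single i 1 : Fin n → ℝ) := by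
      funext j
      simp only [Pi.single_apply]
      have : (Equiv.swap (⟨0, by omega⟩ : Fin n) i) j = ⟨0, by omega⟩ ↔ j = i := by
        rw [Equiv.apply_eq_iff_eq_symm_apply]; simp
      simp [this]
    rw [heq] at hp
    rw [hp, he]
  have hsinglea : ∀ (i : Fin n) (a : ℝ), N (Pi.single i a) = |a| := by
    intro i a
    have : Pi.single i a = a • (Pi.single i 1 : Fin n → ℝ) := by
      funext j; by_cases h : j = i <;> simp [Pi.single_apply, h]
    rw [this, hsmul, hsingle, mul_one]
  -- sum triangle inequality
  have hsum : ∀ (s : Finset (Fin n)) (f : Fin n → Fin n → ℝ),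
      N (∑ i ∈ s, f i) ≤ ∑ i ∈ s, N (f i) := by
    intro s f
    induction s using Finset.cons_induction with
    | empty => simp [hN0]
    | cons a s ha ih =>
      rw [Finset.sum_cons, Finset.sum_cons]
      exact (htri _ _).trans (by linarith)
  set u : Fin n → ℝ := fun i => if (i:ℕ) < 2 then (-1:ℝ) else 3 with hu
  have hNu : N u ≤ 3 * n := by
    calc N u = N (∑ i, Pi.single i (u i)) := by rw [Finset.univ_sum_single]
      _ ≤ ∑ i, N (Pi.single i (u i)) := hsum _ _
      _ ≤ ∑ _i : Fin n, (3:ℝ) := by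
          refine Finset.sum_le_sum fun i _ => ?_
          rw [hsinglea]
          by_cases h : (i:ℕ) ≤ 1 <;> simp [hu, h] <;> norm_num
      _ = 3 * n := by simp [mul_comm]
  set v : Fin n → ℝ := fun i => if (i:ℕ) < 2 then c else 0 with hv
  -- c ≤ 1
  have hc1 : c ≤ 1 := by
    have h := hdrop v {(⟨0, by omega⟩ : Fin n)}
    have heq : (fun i => if i ∈ ({(⟨0, by omega⟩ : Fin n)} : Finset (Fin n)) then v i else 0)
        = Pi.single (⟨0, by omega⟩ : Fin n) c := by
      funext j
      simp only [Finset.mem_singleton, Pi.single_apply]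
      by_cases hj : j = (⟨0, by omega⟩ : Fin n)
      · subst hj; simp [hv]
      · simp [hj]
    rw [heq, hsinglea, hvc, abs_of_pos hc] at h
    exact h
  -- apply the modulus inequality
  have hy : N ((3*(n:ℝ))⁻¹ • u) ≤ 1 := by
    rw [hsmul, abs_of_pos (by positivity : (0:ℝ) < (3*(n:ℝ))⁻¹),
      inv_mul_le_iff₀ (by positivity : (0:ℝ) < 3*(n:ℝ))]
    linarith
  have hmain := hmod v ((3*(n:ℝ))⁻¹ • u) (le_of_eq hvc) hy
  have hε₀y : ε₀ • ((3*(n:ℝ))⁻¹ • u) = ε • u := by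
    rw [smul_smul, hεdef, div_eq_mul_inv]
  rw [hε₀y] at hmain
  -- lower bound for N (v - ε • u)
  have hflip : N (fun i => if (i:ℕ) < 2 then c + ε else 3*ε) = N (v - ε • u) := by
    set e : Fin n → ℝ := fun i => if (i:ℕ) < 2 then (1:ℝ) else -1 with hedef
    have h1 := huncond e (fun i => by by_cases h : (i:ℕ) ≤ 1 <;> simp [hedef, h])
      (fun i => if (i:ℕ) < 2 then c + ε else 3*ε)
    rw [← h1]
    congr 1
    funext i
    by_cases h : (i:ℕ) ≤ 1 <;>
      simp [hedef, hv, hu, h, Pi.sub_apply, Pi.smul_apply] <;> ring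
  have hlow : 1 + ε ≤ N (v - ε • u) := by
    rw [← hflip]
    have h1 := hdrop (fun i => if (i:ℕ) < 2 then c + ε else 3*ε)
      (Finset.univ.filter (fun i : Fin n => (i:ℕ) < 2))
    have heq2 : (fun i => if i ∈ Finset.univ.filter (fun i : Fin n => (i:ℕ) < 2)
        then (if (i:ℕ) < 2 then c + ε else 3*ε) else 0) = ((c+ε)/c) • v := by
      funext i
      by_cases h : (i:ℕ) ≤ 1 <;> simp [hv, h, Pi.smul_apply]
      field_simp
    rw [heq2, hsmul, hvc, mul_one, abs_of_pos (by positivity : (0:ℝ) < (c+ε)/c)] at h1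
    have h2 : 1 + ε ≤ (c+ε)/c := by
      rw [le_div_iff₀ hc]; nlinarith
    linarith
  have hfinal : (fun i : Fin n => if (i:ℕ) < 2 then c - ε₀/(3*(n:ℝ)) else 3*(ε₀/(3*(n:ℝ))))
      = v + ε • u := by
    funext i
    by_cases h : (i:ℕ) ≤ 1 <;>
      simp [hv, hu, h, hεdef, Pi.add_apply, Pi.smul_apply] <;> ring
  rw [hfinal]
  linarith
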